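/- Exponential penalty for sub-quantile level crossings: Let X_1,…,X_m be i.i.d. with CDF F satisfying F(0) = τ and F(0) − F(−ε) ≥ c ε for all ε ∈ (0, ε_0]. Then there exist ε > 0 and constants C, C' > 0 such that P( max_{1 ≤ i ≤ m} τ-quantile(X_{1:i}) ≤ −ε ) ≤ (C'/√m) exp(−C m ε²). -/

import Mathlib

set_option maxHeartbeats 1000000


open MeasureTheory ProbabilityTheory Finset

/-- A canonical empirical `τ`-quantile of the multiset `{z_j : j ∈ s}`: the least `t`
with `#{j : z_j ≤ t} ≥ τ |s|`. -/
noncomputable def empQuantile {ι : Type*} (τ : ℝ) (s : Finset ι) (z : ι → ℝ) : ℝ :=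
  sInf {t : ℝ | τ * s.card ≤ ((s.filter fun j => z j ≤ t).card : ℝ)}

lemma empQuantile_le_imp {ι : Type*} {τ : ℝ} (hτ1 : τ ≤ 1) (s : Finset ι) (z : ι → ℝ) (t : ℝ)
    (h : empQuantile τ s z ≤ t) :
    τ * s.card ≤ ((s.filter fun j => z j ≤ t).card : ℝ) := by
  classical
  by_contra h'
  push_neg at h'
  have hs : s.Nonempty := by
    rcases s.eq_empty_or_nonempty with rfl | hs
    · simp at h'
    · exact hs
  set S : Set ℝ := {u : ℝ | τ * s.card ≤ ((s.filter fun j => z j ≤ u).card : ℝ)} with hS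
  have hSne : S.Nonempty := by
    refine ⟨(s.image z).max' (hs.image z), ?_⟩
    have : s.filter (fun j => z j ≤ (s.image z).max' (hs.image z)) = s := by
      apply Finset.filter_true_of_mem
      intro j hj
      exact Finset.le_max' _ _ (Finset.mem_image_of_mem z hj)
    show τ * s.card ≤ _
    rw [this]
    have : (0:ℝ) < s.card := by exact_mod_cast hs.card_pos
    nlinarith
  set T : Finset ι := s.filter (fun j => t < z j) with hT
  have hTne : T.Nonempty := by
    rcases T.eq_empty_or_nonempty with hTe | hTne
    · exfalso
      have : s.filter (fun j => z j ≤ t) = s := by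
        apply Finset.filter_true_of_mem
        intro j hj
        by_contra hjt
        have : j ∈ T := Finset.mem_filter.2 ⟨hj, lt_of_not_ge hjt⟩
        simp [hTe] at this
      rw [this] at h'
      have : (0:ℝ) < s.card := by exact_mod_cast hs.card_pos
      nlinarith
    · exact hTne
  set t0 : ℝ := (T.image z).min' (hTne.image z) with ht0
  have htt0 : t < t0 := by
    obtain ⟨j, hj, hje⟩ := Finset.mem_image.1 (Finset.min'_mem (T.image z) (hTne.image z))
    rw [ht0, ← hje]
    exact (Finset.mem_filter.1 hj).2
  have hlb : t0 ≤ empQuantile τ s z := by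
    apply le_csInf hSne
    intro u hu
    by_contra hut
    push_neg at hut
    have hsub : s.filter (fun j => z j ≤ u) ⊆ s.filter (fun j => z j ≤ t) := by
      intro j hj
      obtain ⟨hjs, hju⟩ := Finset.mem_filter.1 hj
      refine Finset.mem_filter.2 ⟨hjs, ?_⟩
      by_contra hjt
      have hjT : j ∈ T := Finset.mem_filter.2 ⟨hjs, lt_of_not_ge hjt⟩
      have : t0 ≤ z j := Finset.min'_le _ _ (Finset.mem_image_of_mem z hjT)
      linarith
    have := Finset.card_le_card hsub
    have hu' : τ * s.card ≤ ((s.filter fun j => z j ≤ u).card : ℝ) := hu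
    have : ((s.filter fun j => z j ≤ u).card : ℝ) ≤ ((s.filter fun j => z j ≤ t).card : ℝ) := by
      exact_mod_cast this
    linarith
  linarith

/-- exponential penalty for sub-quantile level crossings.  For i.i.d.
`X_1, X_2, …` with CDF `F`, `F(0) = τ`, and `F(0) − F(−e) ≥ c e` for `e ∈ (0, ε₀]`,
there exist `ε > 0` and `C, C' > 0` such that for all `m ≥ 1`,
`P(max_{1 ≤ i ≤ m} τ-quantile(X_{1:i}) ≤ −ε) ≤ (C'/√m) exp(−C m ε²)`. -/
theorem subquantile_crossing_bound {Ω : Type*} [MeasurableSpace Ω]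
    (μ : Measure Ω) [IsProbabilityMeasure μ]
    (τ : ℝ) (hτ : τ ∈ Set.Ioo (0:ℝ) 1)
    (X : ℕ → Ω → ℝ) (hmeas : ∀ j, Measurable (X j))
    (hindep : iIndepFun X μ)
    (F : ℝ → ℝ) (hF : ∀ j t, (μ {ω | X j ω ≤ t}).toReal = F t) (hF0 : F 0 = τ)
    (c ε0 : ℝ) (hc : 0 < c) (hε0 : 0 < ε0)
    (hgrowth : ∀ e ∈ Set.Ioc (0:ℝ) ε0, c * e ≤ F 0 - F (-e)) :
    ∃ ε C C' : ℝ, 0 < ε ∧ 0 < C ∧ 0 < C' ∧ ∀ m : ℕ, ∀ hm : 1 ≤ m,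
      μ {ω | (Finset.Icc 1 m).sup' (Finset.nonempty_Icc.mpr hm)
          (fun i => empQuantile τ (Finset.Icc 1 i) (fun j => X j ω)) ≤ -ε} ≤
        ENNReal.ofReal (C' / Real.sqrt m * Real.exp (-C * m * ε ^ 2)) := by
  obtain ⟨hτ0, hτ1⟩ := hτ
  set p : ℝ := F (-ε0) with hpdef
  have hp0 : 0 ≤ p := by rw [hpdef, ← hF 0 (-ε0)]; exact ENNReal.toReal_nonneg
  have hp1 : p ≤ 1 := by
    rw [hpdef, ← hF 0 (-ε0)]
    have h1 : μ {ω | X 0 ω ≤ -ε0} ≤ μ Set.univ := measure_mono (Set.subset_univ _)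
    rw [measure_univ] at h1
    simpa using ENNReal.toReal_mono (by simp) h1
  set δ : ℝ := τ - p with hδdef
  have hδpos : 0 < δ := by
    have := hgrowth ε0 ⟨hε0, le_refl ε0⟩
    rw [hF0] at this
    nlinarith
  have hδ1 : δ ≤ 1 := by rw [hδdef]; linarith
  set t : ℝ := δ / 2 with htdef
  have ht0 : 0 < t := by positivity
  have ht1 : t ≤ 1 := by rw [htdef]; linarith
  set a : ℝ := δ ^ 2 / 4 with hadef
  have hapos : 0 < a := by positivity
  refine ⟨ε0, a / (2 * ε0 ^ 2), 2 / a, hε0, by positivity, by positivity, ?_⟩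
  intro m hm
  set g : ℝ → ℝ := fun x => if x ≤ -ε0 then 1 else 0 with hgdef
  have hgmeas : Measurable g := by
    apply Measurable.ite _ measurable_const measurable_const
    exact measurableSet_Iic
  set Y : ℕ → Ω → ℝ := fun j => g ∘ X j with hYdef
  have hYmeas : ∀ j, Measurable (Y j) := fun j => hgmeas.comp (hmeas j)
  have hYindep : iIndepFun Y μ :=
    hindep.comp (fun _ => g) (fun _ => hgmeas)
  have hm1 : (1:ℝ) ≤ (m:ℝ) := by exact_mod_cast hm
  -- event inclusion
  have hsub : {ω | (Finset.Icc 1 m).sup' (Finset.nonempty_Icc.mpr hm)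
          (fun i => empQuantile τ (Finset.Icc 1 i) (fun j => X j ω)) ≤ -ε0} ⊆
      {ω | τ * m ≤ (∑ j ∈ Finset.Icc 1 m, Y j) ω} := by
    intro ω hω
    simp only [Set.mem_setOf_eq] at hω ⊢
    have h1 : empQuantile τ (Finset.Icc 1 m) (fun j => X j ω) ≤ -ε0 :=
      le_trans (Finset.le_sup' (f := fun i => empQuantile τ (Finset.Icc 1 i) (fun j => X j ω))
        (Finset.mem_Icc.2 ⟨hm, le_refl m⟩)) hω
    have h2 := empQuantile_le_imp hτ1.le (Finset.Icc 1 m) (fun j => X j ω) (-ε0) h1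
    have hcard : ((Finset.Icc 1 m).card : ℝ) = m := by simp [Nat.card_Icc]
    have hsum : (∑ j ∈ Finset.Icc 1 m, Y j) ω
        = (((Finset.Icc 1 m).filter fun j => X j ω ≤ -ε0).card : ℝ) := by
      rw [Finset.sum_apply]
      rw [← Finset.sum_boole]
      rfl
    rw [hsum, ← hcard]
    exact h2
  -- per-coordinate mgf
  have hAmeas : ∀ j : ℕ, MeasurableSet {ω | X j ω ≤ -ε0} := fun j =>
    (hmeas j) measurableSet_Iic
  have hYrepr : ∀ j : ℕ, (fun ω => Real.exp (t * Y j ω))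
      = fun ω => Set.indicator {ω | X j ω ≤ -ε0} (fun _ => Real.exp t - 1) ω + 1 := by
    intro j
    funext ω
    by_cases h : X j ω ≤ -ε0 <;>
      simp [hYdef, hgdef, Set.indicator, h, Function.comp]
  have h_int : ∀ j : ℕ, Integrable (fun ω => Real.exp (t * Y j ω)) μ := by
    intro j
    rw [hYrepr j]
    exact ((integrable_const _).indicator (hAmeas j)).add (integrable_const 1)
  have hmgf : ∀ j : ℕ, mgf (Y j) μ t = 1 + (Real.exp t - 1) * p := by
    intro j
    rw [mgf, hYrepr j, integral_add ((integrable_const _).indicator (hAmeas j))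
      (integrable_const 1), integral_indicator_const _ (hAmeas j), integral_const]
    simp [hF j (-ε0), ← hpdef]
    rw [measureReal_def, hF j (-ε0), ← hpdef]
    ring
  -- Chernoff
  have h_int_sum : Integrable (fun ω => Real.exp (t * (∑ j ∈ Finset.Icc 1 m, Y j) ω)) μ :=
    hYindep.integrable_exp_mul_sum hYmeas (fun j _ => h_int j)
  have hcher := measure_ge_le_exp_mul_mgf (μ := μ) (X := ∑ j ∈ Finset.Icc 1 m, Y j)
    (τ * m) ht0.le h_int_sum
  have hprod : mgf (∑ j ∈ Finset.Icc 1 m, Y j) μ t = (1 + (Real.exp t - 1) * p) ^ m := by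
    rw [hYindep.mgf_sum hYmeas]
    rw [Finset.prod_congr rfl (fun j _ => hmgf j), Finset.prod_const]
    congr 1
    simp [Nat.card_Icc]
  -- arithmetic bound
  have hq0 : (0:ℝ) ≤ 1 + (Real.exp t - 1) * p := by
    nlinarith [Real.one_le_exp ht0.le]
  have hq : 1 + (Real.exp t - 1) * p ≤ Real.exp (p * (Real.exp t - 1)) := by
    have := Real.add_one_le_exp (p * (Real.exp t - 1))
    linarith
  have hkey : p * (Real.exp t - 1) - t * τ ≤ -a := by
    have he : Real.exp t ≤ 1 + t + t ^ 2 := by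
      have h2 := Real.exp_bound' ht0.le ht1 (n := 2) (by norm_num)
      simp [Finset.sum_range_succ, Nat.factorial] at h2
      nlinarith [sq_nonneg t]
    nlinarith [sq_nonneg t, mul_nonneg hp0 (sq_nonneg t)]
  have hchain : Real.exp (-t * (τ * m)) * mgf (∑ j ∈ Finset.Icc 1 m, Y j) μ t
      ≤ Real.exp (-a * m) := by
    rw [hprod]
    calc Real.exp (-t * (τ * m)) * (1 + (Real.exp t - 1) * p) ^ m
        ≤ Real.exp (-t * (τ * m)) * Real.exp (p * (Real.exp t - 1)) ^ m := by
          gcongr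
      _ = Real.exp ((p * (Real.exp t - 1) - t * τ) * m) := by
          rw [← Real.exp_nat_mul, ← Real.exp_add]; ring_nf
      _ ≤ Real.exp (-a * m) := by
          apply Real.exp_le_exp.2
          have h0m : (0:ℝ) ≤ m := by linarith
          nlinarith
  -- final comparison
  have hfinal : Real.exp (-a * m) ≤ 2 / a / Real.sqrt m
      * Real.exp (-(a / (2 * ε0 ^ 2)) * m * ε0 ^ 2) := by
    have hexp : -(a / (2 * ε0 ^ 2)) * m * ε0 ^ 2 = -(a / 2) * m := by
      field_simp
    rw [hexp]
    have hsm : 0 < Real.sqrt m := Real.sqrt_pos.2 (by linarith)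
    have hE : 0 < Real.exp (a / 2 * m) := Real.exp_pos _
    have hsqm : Real.sqrt m ≤ (m:ℝ) := by
      have h1 : Real.sqrt m ≤ Real.sqrt ((m:ℝ) ^ 2) := Real.sqrt_le_sqrt (by nlinarith)
      rwa [Real.sqrt_sq (by linarith)] at h1
    have hmE : Real.sqrt m ≤ 2 / a * Real.exp (a / 2 * m) := by
      have h2 : a / 2 * m + 1 ≤ Real.exp (a / 2 * m) := Real.add_one_le_exp _
      calc Real.sqrt m ≤ (m:ℝ) := hsqm
        _ = 2 / a * (a / 2 * m) := by field_simp
        _ ≤ 2 / a * Real.exp (a / 2 * m) := by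
            apply mul_le_mul_of_nonneg_left _ (by positivity)
            linarith
    have hinv : Real.exp (-(a / 2) * m) ≤ 2 / a / Real.sqrt m := by
      rw [show -(a / 2) * (m:ℝ) = -(a / 2 * m) by ring, Real.exp_neg,
        inv_eq_one_div, div_le_div_iff₀ hE hsm]
      linarith
    calc Real.exp (-a * m) = Real.exp (-(a / 2) * m) * Real.exp (-(a / 2) * m) := by
          rw [← Real.exp_add]; ring_nf
      _ ≤ (2 / a / Real.sqrt m) * Real.exp (-(a / 2) * m) := by
          apply mul_le_mul_of_nonneg_right hinv (Real.exp_pos _).le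
  calc μ {ω | (Finset.Icc 1 m).sup' (Finset.nonempty_Icc.mpr hm)
          (fun i => empQuantile τ (Finset.Icc 1 i) (fun j => X j ω)) ≤ -ε0}
      ≤ μ {ω | τ * m ≤ (∑ j ∈ Finset.Icc 1 m, Y j) ω} := measure_mono hsub
    _ = ENNReal.ofReal (μ {ω | τ * m ≤ (∑ j ∈ Finset.Icc 1 m, Y j) ω}).toReal :=
        (ENNReal.ofReal_toReal (measure_ne_top _ _)).symm
    _ ≤ ENNReal.ofReal (2 / a / Real.sqrt m
        * Real.exp (-(a / (2 * ε0 ^ 2)) * m * ε0 ^ 2)) :=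
        ENNReal.ofReal_le_ofReal (le_trans hcher (le_trans hchain hfinal))
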